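/- Let P ∈ ℝ^{n×n} be symmetric with p̲·I ⪯ P for some p̲ > 0, let M ∈ ℝ^{n×n} be symmetric, let L ∈ ℝ^{n×m}, and let μ > 0. If the symmetric block matrix [[−μ·Iₙ, P, 0], [P, M, L], [0, Lᵀ, −2·I_m]] ⪯ 0, then the block matrix [[M + (p̲/μ)·P, L], [Lᵀ, −2·I_m]] ⪯ 0. -/

import Mathlib

open Matrix

theorem block_LMI_reduction
    (n m : ℕ) (P M : Matrix (Fin n) (Fin n) ℝ)
    (hPsymm : P.IsSymm) (hMsymm : M.IsSymm)
    (L : Matrix (Fin n) (Fin m) ℝ) (p₁ μ : ℝ) (hp₁ : 0 < p₁) (hμ : 0 < μ)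
    (hPlo : (P - p₁ • (1 : Matrix (Fin n) (Fin n) ℝ)).PosSemidef)
    (hLMI : (-(Matrix.fromBlocks
        (Matrix.fromBlocks (-μ • (1 : Matrix (Fin n) (Fin n) ℝ)) P P M)
        (Matrix.fromRows (0 : Matrix (Fin n) (Fin m) ℝ) L)
        (Matrix.fromCols (0 : Matrix (Fin m) (Fin n) ℝ) Lᵀ)
        (-(2 : ℝ) • (1 : Matrix (Fin m) (Fin m) ℝ)))).PosSemidef) :
    (-(Matrix.fromBlocks (M + (p₁ / μ) • P) L Lᵀ
        (-(2 : ℝ) • (1 : Matrix (Fin m) (Fin m) ℝ)))).PosSemidef := by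
  set A := P - p₁ • (1 : Matrix (Fin n) (Fin n) ℝ) with hA
  have hP2 : (P * P - p₁ • P).PosSemidef := by
    have heq : P * P - p₁ • P = Aᴴ * A + p₁ • A := by
      have : Aᴴ = A := hPlo.1
      rw [this, hA]
      simp [sub_mul, mul_sub, smul_sub, smul_smul, Matrix.smul_mul, Matrix.mul_smul]
    rw [heq]
    rw [posSemidef_iff_dotProduct_mulVec]
    constructor
    · exact (posSemidef_conjTranspose_mul_self A).1.add
        (by rw [Matrix.IsHermitian, Matrix.conjTranspose_smul, star_trivial, hPlo.1])
    · intro x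
      have h1 := (posSemidef_conjTranspose_mul_self A).dotProduct_mulVec_nonneg x
      have h2 := hPlo.dotProduct_mulVec_nonneg x
      simp only [add_mulVec, dotProduct_add, smul_mulVec, dotProduct_smul, smul_eq_mul] at *
      nlinarith
  rw [posSemidef_iff_dotProduct_mulVec]
  constructor
  · ext i j
    rcases i with i | i <;> rcases j with j | j <;>
      simp [Matrix.conjTranspose_apply, Matrix.fromBlocks, hMsymm.apply, hPsymm.apply,
        Matrix.one_apply, eq_comm]
  · intro x
    set y := x ∘ Sum.inl with hy
    set z := x ∘ Sum.inr with hz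
    have hx : x = Sum.elim y z := (Sum.elim_comp_inl_inr x).symm
    rw [hx]
    have key := hLMI.dotProduct_mulVec_nonneg (Sum.elim (Sum.elim (μ⁻¹ • (P *ᵥ y)) y) z)
    have e1 : y ⬝ᵥ (P *ᵥ (P *ᵥ y)) = (P *ᵥ y) ⬝ᵥ (P *ᵥ y) := by
      rw [dotProduct_mulVec]
      congr 1
      nth_rewrite 1 [← hPsymm]
      rw [vecMul_transpose]
    have e2 := hP2.dotProduct_mulVec_nonneg y
    simp only [star_trivial, Pi.star_apply, neg_mulVec, fromBlocks_mulVec, fromRows_mulVec,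
      fromCols_mulVec_sumElim, sumElim_dotProduct_sumElim, dotProduct_neg,
      smul_mulVec, one_mulVec, zero_mulVec, Matrix.mulVec_smul, dotProduct_smul,
      smul_dotProduct, smul_eq_mul, dotProduct_add, add_dotProduct, dotProduct_zero,
      zero_dotProduct, add_mulVec, sub_mulVec, dotProduct_sub, neg_smul, dotProduct_neg,
      Pi.smul_apply, neg_mulVec, mulVec_mulVec, zero_add, add_zero, Matrix.add_mulVec,
      Sum.elim_comp_inl, Sum.elim_comp_inr, Matrix.neg_mul, Matrix.smul_mul, Matrix.one_mul,
      Matrix.zero_mul] at key e2 e1 ⊢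
    have hμi : (0:ℝ) < μ⁻¹ := inv_pos.mpr hμ
    have h3 : p₁ / μ * (y ⬝ᵥ P *ᵥ y) ≤ μ⁻¹ * (y ⬝ᵥ (P * P) *ᵥ y) := by
      rw [div_eq_mul_inv]
      nlinarith [e2, hμi]
    rw [e1] at h3
    have hk : μ⁻¹ * -(μ * (μ⁻¹ * (P *ᵥ y ⬝ᵥ P *ᵥ y))) = -(μ⁻¹ * (P *ᵥ y ⬝ᵥ P *ᵥ y)) := by
      field_simp
    rw [e1, hk] at key
    linarith [key, h3]
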